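/- Let σ = σ₁·σ₂. Suppose there is no HB-race within σ₁ and no HB-race within σ₂, and suppose there is an HB-race between events e ∈ σ₁ and e' ∈ σ₂. Then there is an HB-race between last₁ and first₂, where last₁ is the last read of x by the thread of e in σ₁ if e is a read of x, and the last write of x in σ₁ if e is a write of x; and first₂ is the first read of x by the thread of e' in σ₂ if e' is a read of x, and the first write of x in σ₂ if e' is a write of x. -/

import Mathlib

/-- Operations performed by events: reads/writes of variables, acquires/releases
of locks, forks/joins of threads. -/
inductive Op (V L T : Type) : Type where
  | rd (x : V) | wt (x : V) | acq (l : L) | rel (l : L) | fork (t : T) | join (t : T)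
  deriving DecidableEq

/-- An event is a thread together with an operation. -/
structure Event (V L T : Type) : Type where
  thread : T
  op : Op V L T
  deriving DecidableEq

/-- A trace is a finite sequence of events; events are referred to by their
position (index) in the trace. -/
abbrev Trace (V L T : Type) := List (Event V L T)

variable {V L T : Type}

/-- The base edges of the happens-before relation: `i` precedes `j` in trace order and
the events are in the same thread, form a rel/acq pair on a lock, a fork-to-child
pair, or a child-to-join pair. -/
def hbEdge (σ : Trace V L T) (i j : ℕ) : Prop :=
  i < j ∧ ∃ e e', σ[i]? = some e ∧ σ[j]? = some e' ∧
    (e.thread = e'.thread ∨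
     (∃ l, e.op = Op.rel l ∧ e'.op = Op.acq l) ∨
     e.op = Op.fork e'.thread ∨
     e'.op = Op.join e.thread)

/-- Happens-before: the reflexive-transitive closure of the base edges. -/
def HB (σ : Trace V L T) : ℕ → ℕ → Prop :=
  Relation.ReflTransGen (hbEdge σ)

/-- Two events conflict: different threads, access a common variable, at least one write. -/
def Conflict (e e' : Event V L T) : Prop :=
  e.thread ≠ e'.thread ∧
  ∃ x, (e.op = Op.wt x ∧ (e'.op = Op.wt x ∨ e'.op = Op.rd x)) ∨
       (e.op = Op.rd x ∧ e'.op = Op.wt x)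

/-- A trace has an HB-race iff it has a pair of conflicting events incomparable
under happens-before. -/
def HBRace (σ : Trace V L T) : Prop :=
  ∃ i j e e', σ[i]? = some e ∧ σ[j]? = some e' ∧ Conflict e e' ∧
    ¬ HB σ i j ∧ ¬ HB σ j i

/-- `f` is an event of the same "kind" as the access event `e` of variable `x`:
a read of `x` by the thread of `e` if `e` reads `x`, and a write of `x` if `e` writes `x`. -/
def SameKind (e f : Event V L T) (x : V) : Prop :=
  (e.op = Op.rd x ∧ f.thread = e.thread ∧ f.op = Op.rd x) ∨
  (e.op = Op.wt x ∧ f.op = Op.wt x)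

/-- if `σ₁` and `σ₂` are race-free but there is an HB-race in `σ₁·σ₂`
between `e ∈ σ₁` and `e' ∈ σ₂` (both accessing variable `x`), then there is an HB-race
between the last event of `σ₁` of the kind of `e` and the first event of `σ₂` of the
kind of `e'`. -/

lemma hb_le {σ : Trace V L T} {a b : ℕ} (h : HB σ a b) : a ≤ b := by
  induction h with
  | refl => exact le_refl _
  | tail _ hedge ih => exact ih.trans hedge.1.le

lemma lookup_lt {σ : Trace V L T} {a : ℕ} {e : Event V L T}
    (h : σ[a]? = some e) : a < σ.length := by
  by_contra hc
  rw [List.getElem?_eq_none (by omega)] at h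
  exact nomatch h

lemma lookup_append_left {σ₁ σ₂ : Trace V L T} {a : ℕ} {e : Event V L T}
    (h : σ₁[a]? = some e) : (σ₁ ++ σ₂)[a]? = some e := by
  rw [List.getElem?_append, if_pos (lookup_lt h)]; exact h

lemma lookup_append_right {σ₁ σ₂ : Trace V L T} {a : ℕ} {e : Event V L T}
    (h : σ₂[a]? = some e) : (σ₁ ++ σ₂)[σ₁.length + a]? = some e := by
  rw [List.getElem?_append_right (by omega)]
  simpa using h

lemma hb_left {σ₁ σ₂ : Trace V L T} {a b : ℕ} (h : HB σ₁ a b) : HB (σ₁ ++ σ₂) a b := by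
  induction h with
  | refl => exact .refl
  | tail _ hedge ih =>
    obtain ⟨hlt, e, f, he, hf, hr⟩ := hedge
    exact ih.tail ⟨hlt, e, f, lookup_append_left he, lookup_append_left hf, hr⟩

lemma hb_right {σ₁ σ₂ : Trace V L T} {a b : ℕ} (h : HB σ₂ a b) :
    HB (σ₁ ++ σ₂) (σ₁.length + a) (σ₁.length + b) := by
  induction h with
  | refl => exact .refl
  | tail _ hedge ih =>
    obtain ⟨hlt, e, f, he, hf, hr⟩ := hedge
    exact ih.tail ⟨by omega, e, f, lookup_append_right he, lookup_append_right hf, hr⟩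

lemma hb_of_noRace {σ : Trace V L T} (hnr : ¬ HBRace σ) {a b : ℕ} {e f : Event V L T}
    (ha : σ[a]? = some e) (hb : σ[b]? = some f) (hc : Conflict e f) (hab : a ≤ b) :
    HB σ a b := by
  by_contra h
  exact hnr ⟨a, b, e, f, ha, hb, hc, h, fun h' => by
    have := hb_le h'
    have : a = b := by omega
    exact h (this ▸ Relation.ReflTransGen.refl)⟩

lemma hb_of_thread_eq {σ : Trace V L T} {a b : ℕ} {e f : Event V L T}
    (ha : σ[a]? = some e) (hb : σ[b]? = some f) (ht : e.thread = f.thread) (hab : a ≤ b) :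
    HB σ a b := by
  rcases eq_or_lt_of_le hab with rfl | h
  · exact .refl
  · exact .single ⟨h, e, f, ha, hb, Or.inl ht⟩

theorem race_last_first (σ₁ σ₂ : Trace V L T) (x : V)
    (hnr1 : ¬ HBRace σ₁) (hnr2 : ¬ HBRace σ₂)
    (i j : ℕ) (e e' : Event V L T)
    (hie : σ₁[i]? = some e) (hje : σ₂[j]? = some e')
    (hex : e.op = Op.rd x ∨ e.op = Op.wt x)
    (he'x : e'.op = Op.rd x ∨ e'.op = Op.wt x)
    (hconf : Conflict e e')
    (hincomp : ¬ HB (σ₁ ++ σ₂) i (σ₁.length + j) ∧ ¬ HB (σ₁ ++ σ₂) (σ₁.length + j) i)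
    (il jf : ℕ) (fl ff : Event V L T)
    (hil : σ₁[il]? = some fl) (hjf : σ₂[jf]? = some ff)
    (hlast : SameKind e fl x) (hlast' : ∀ k g, σ₁[k]? = some g → SameKind e g x → k ≤ il)
    (hfirst : SameKind e' ff x) (hfirst' : ∀ k g, σ₂[k]? = some g → SameKind e' g x → jf ≤ k) :
    Conflict fl ff ∧ ¬ HB (σ₁ ++ σ₂) il (σ₁.length + jf) ∧
      ¬ HB (σ₁ ++ σ₂) (σ₁.length + jf) il := by
  obtain ⟨htne, y, hcy⟩ := hconf
  -- pin down op shapes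
  have hself : SameKind e e x := by
    rcases hex with h | h
    · exact Or.inl ⟨h, rfl, h⟩
    · exact Or.inr ⟨h, h⟩
  have hself' : SameKind e' e' x := by
    rcases he'x with h | h
    · exact Or.inl ⟨h, rfl, h⟩
    · exact Or.inr ⟨h, h⟩
  have hiil : i ≤ il := hlast' i e hie hself
  have hjfj : jf ≤ j := hfirst' j e' hje hself'
  -- HB σ₁ i il
  have hb1 : HB σ₁ i il := by
    rcases hlast with ⟨_, ht, _⟩ | ⟨hew, hflw⟩
    · exact hb_of_thread_eq hie hil ht.symm hiil
    · by_cases ht : e.thread = fl.thread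
      · exact hb_of_thread_eq hie hil ht hiil
      · exact hb_of_noRace hnr1 hie hil ⟨ht, x, Or.inl ⟨hew, Or.inl hflw⟩⟩ hiil
  -- HB σ₂ jf j
  have hb2 : HB σ₂ jf j := by
    rcases hfirst with ⟨_, ht, _⟩ | ⟨he'w, hffw⟩
    · exact hb_of_thread_eq hjf hje ht hjfj
    · by_cases ht : ff.thread = e'.thread
      · exact hb_of_thread_eq hjf hje ht hjfj
      · exact hb_of_noRace hnr2 hjf hje ⟨ht, x, Or.inl ⟨hffw, Or.inl he'w⟩⟩ hjfj
  have key : ¬ HB (σ₁ ++ σ₂) il (σ₁.length + jf) := by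
    intro h
    exact hincomp.1 ((hb_left hb1).trans (h.trans (hb_right hb2)))
  have hillt : il < σ₁.length := lookup_lt hil
  have htne' : fl.thread ≠ ff.thread := by
    intro ht
    exact key (.single ⟨by omega, fl, ff, lookup_append_left hil,
      lookup_append_right hjf, Or.inl ht⟩)
  refine ⟨⟨htne', x, ?_⟩, key, fun h => by have := hb_le h; omega⟩
  rcases hex with her | hew
  · -- e reads x, so from conflict e' writes
    rcases hcy with ⟨hew, _⟩ | ⟨_, he'w⟩
    · rw [her] at hew; exact nomatch hew
    · rcases hlast with ⟨_, _, hflr⟩ | ⟨hew, _⟩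
      · rcases hfirst with ⟨he'r, _, _⟩ | ⟨_, hffw⟩
        · rw [he'w] at he'r; exact nomatch he'r
        · exact Or.inr ⟨hflr, hffw⟩
      · rw [her] at hew; exact nomatch hew
  · -- e writes x
    rcases hlast with ⟨her, _, _⟩ | ⟨_, hflw⟩
    · rw [hew] at her; exact nomatch her
    · rcases hfirst with ⟨_, _, hffr⟩ | ⟨_, hffw⟩
      · exact Or.inl ⟨hflw, Or.inr hffr⟩
      · exact Or.inl ⟨hflw, Or.inl hffw⟩
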